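/- Let G₁, G₂ be connected edge labeled graphs each satisfying UDP, with V(G₁) ∩ V(G₂) = {z}, and let G = G₁ ∪ G₂ be their pasting at z. Then G satisfies UDP if and only if for all u ∈ V(G₁) and w ∈ V(G₂): ⋂_{P ∈ P(u,w)} α(P) = (⋂_{P ∈ P(u,z)} α(P)) + (⋂_{P ∈ P(z,w)} α(P)). -/

import Mathlib

open SimpleGraph

/-- A generalized spline on an edge labeled graph. -/
def IsSpline {V R : Type*} [CommRing R] (G : SimpleGraph V)
    (α : Sym2 V → Ideal R) (ρ : V → R) : Prop :=
  ∀ u v : V, G.Adj u v → ρ u - ρ v ∈ α s(u, v)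

/-- The sum of the ideals labeling the edges of a walk. -/
def walkIdealSum {V R : Type*} [CommRing R] (G : SimpleGraph V)
    (α : Sym2 V → Ideal R) {u w : V} (p : G.Walk u w) : Ideal R :=
  (p.edges.map α).sum

/-- The intersection of `α(P)` over all paths `P` from `u` to `w`. -/
def pathsInf {V R : Type*} [CommRing R] (G : SimpleGraph V)
    (α : Sym2 V → Ideal R) (u w : V) : Ideal R :=
  ⨅ (p : G.Walk u w) (_ : p.IsPath), walkIdealSum G α p

/-- The Universal Difference Property. -/
def UDP {V R : Type*} [CommRing R] (G : SimpleGraph V)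
    (α : Sym2 V → Ideal R) : Prop :=
  ∀ u w : V, G.Reachable u w → ∀ x ∈ pathsInf G α u w,
    ∃ ρ : V → R, IsSpline G α ρ ∧ ρ u - ρ w = x

/-- A Prüfer domain: every nonzero finitely generated ideal is invertible. -/
def IsPruferDomain (R : Type*) [CommRing R] [IsDomain R] : Prop :=
  ∀ I : Ideal R, I ≠ ⊥ → I.FG →
    IsUnit (I : FractionalIdeal (nonZeroDivisors R) (FractionRing R))

section Helpers

variable {V R : Type*} [CommRing R]

lemma mem_pathsInf_iff {G : SimpleGraph V} {α : Sym2 V → Ideal R} {u w : V} {x : R} :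
    x ∈ pathsInf G α u w ↔ ∀ (p : G.Walk u w), p.IsPath → x ∈ walkIdealSum G α p := by
  simp [pathsInf, Submodule.mem_iInf]

lemma spline_sub_mem {G : SimpleGraph V} {α : Sym2 V → Ideal R} {ρ : V → R}
    (hρ : IsSpline G α ρ) {a b : V} (p : G.Walk a b) :
    ρ a - ρ b ∈ walkIdealSum G α p := by
  induction p with
  | nil => rw [sub_self]; exact zero_mem _
  | @cons a c b h q ih =>
    have heq : ρ a - ρ b = (ρ a - ρ c) + (ρ c - ρ b) := by ring
    rw [heq, walkIdealSum, Walk.edges_cons, List.map_cons, List.sum_cons,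
      Submodule.add_eq_sup]
    exact Submodule.add_mem_sup (hρ a c h) ih

lemma pathsInf_anti {G G' : SimpleGraph V} (hGG : G ≤ G') (α : Sym2 V → Ideal R) (u w : V) :
    pathsInf G' α u w ≤ pathsInf G α u w := by
  refine le_iInf₂ fun p hp => ?_
  have hedges : ∀ e ∈ p.edges, e ∈ G'.edgeSet := fun e he =>
    SimpleGraph.edgeSet_mono hGG (p.edges_subset_edgeSet he)
  have h1 : pathsInf G' α u w ≤ walkIdealSum G' α (p.transfer G' hedges) :=
    iInf₂_le _ (hp.transfer hedges)
  refine h1.trans_eq ?_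
  rw [walkIdealSum, walkIdealSum, Walk.edges_transfer]

lemma walkIdealSum_append {G : SimpleGraph V} (α : Sym2 V → Ideal R) {u v w : V}
    (p : G.Walk u v) (q : G.Walk v w) :
    walkIdealSum G α (p.append q) = walkIdealSum G α p + walkIdealSum G α q := by
  simp [walkIdealSum, Walk.edges_append]

lemma pathsInf_symm (G : SimpleGraph V) (α : Sym2 V → Ideal R) (u w : V) :
    pathsInf G α u w = pathsInf G α w u := by
  have key : ∀ a b : V, pathsInf G α a b ≤ pathsInf G α b a := by
    intro a b
    refine le_iInf₂ fun q hq => ?_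
    have h1 : pathsInf G α a b ≤ walkIdealSum G α q.reverse := iInf₂_le _ hq.reverse
    refine h1.trans_eq ?_
    simp [walkIdealSum, Walk.edges_reverse, List.map_reverse, List.sum_reverse]
  exact le_antisymm (key u w) (key w u)

lemma pathsInf_self_le_bot (G : SimpleGraph V) (α : Sym2 V → Ideal R) (u : V) :
    pathsInf G α u u ≤ ⊥ := by
  have h1 : pathsInf G α u u ≤ walkIdealSum G α (Walk.nil : G.Walk u u) :=
    iInf₂_le _ Walk.IsPath.nil
  refine h1.trans_eq ?_
  simp [walkIdealSum]

end Helpers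

theorem pasted_UDP_iff {V R : Type*} [CommRing R]
    (G₁ G₂ : SimpleGraph V) (α : Sym2 V → Ideal R) (S₁ S₂ : Set V) (z : V)
    (hE₁ : ∀ a b, G₁.Adj a b → a ∈ S₁ ∧ b ∈ S₁)
    (hE₂ : ∀ a b, G₂.Adj a b → a ∈ S₂ ∧ b ∈ S₂)
    (hz : S₁ ∩ S₂ = {z})
    (hc₁ : ∀ a ∈ S₁, ∀ b ∈ S₁, G₁.Reachable a b)
    (hc₂ : ∀ a ∈ S₂, ∀ b ∈ S₂, G₂.Reachable a b)
    (h₁ : UDP G₁ α) (h₂ : UDP G₂ α) :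
    UDP (G₁ ⊔ G₂) α ↔
      ∀ u ∈ S₁, ∀ w ∈ S₂,
        pathsInf (G₁ ⊔ G₂) α u w =
          pathsInf (G₁ ⊔ G₂) α u z + pathsInf (G₁ ⊔ G₂) α z w := by
  classical
  have hz1 : z ∈ S₁ := by
    have : z ∈ S₁ ∩ S₂ := by rw [hz]; exact Set.mem_singleton z
    exact this.1
  have hz2 : z ∈ S₂ := by
    have : z ∈ S₁ ∩ S₂ := by rw [hz]; exact Set.mem_singleton z
    exact this.2
  have hmemz : ∀ v, v ∈ S₁ → v ∈ S₂ → v = z := by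
    intro v h1' h2'
    have : v ∈ S₁ ∩ S₂ := ⟨h1', h2'⟩
    rw [hz] at this
    exact this
  -- every walk from S₁ to S₂ passes through z
  have hsupp : ∀ {a b : V} (p : (G₁ ⊔ G₂).Walk a b), a ∈ S₁ → b ∈ S₂ → z ∈ p.support := by
    intro a b p
    induction p with
    | nil =>
      intro ha hb
      rw [Walk.support_nil]
      simp [hmemz _ ha hb]
    | @cons a c b h q ih =>
      intro ha hb
      rw [sup_adj] at h
      rcases h with h' | h'
      · have hc : c ∈ S₁ := (hE₁ a c h').2
        rw [Walk.support_cons]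
        exact List.mem_cons_of_mem _ (ih hc hb)
      · have haz : a = z := hmemz a ha (hE₂ a c h').1
        rw [Walk.support_cons, haz]
        exact List.mem_cons_self
  -- gluing two splines
  have glue : ∀ (ρ₁ ρ₂ : V → R), IsSpline G₁ α ρ₁ → IsSpline G₂ α ρ₂ →
      ∃ ρ : V → R, IsSpline (G₁ ⊔ G₂) α ρ ∧ (∀ v ∈ S₁, ρ v = ρ₁ v) ∧
        (∀ v ∈ S₂, ρ v = ρ₂ v + (ρ₁ z - ρ₂ z)) := by
    intro ρ₁ ρ₂ hρ₁ hρ₂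
    set ρ : V → R := fun v => if v ∈ S₂ then ρ₂ v + (ρ₁ z - ρ₂ z) else ρ₁ v with hρdef
    have hag1 : ∀ v ∈ S₁, ρ v = ρ₁ v := by
      intro v hv
      by_cases hv2 : v ∈ S₂
      · have hvz := hmemz v hv hv2
        subst hvz
        simp [hρdef, hz2]
      · simp [hρdef, hv2]
    have hag2 : ∀ v ∈ S₂, ρ v = ρ₂ v + (ρ₁ z - ρ₂ z) := by
      intro v hv
      simp [hρdef, hv]
    refine ⟨ρ, ?_, hag1, hag2⟩
    intro a b hab
    rw [sup_adj] at hab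
    rcases hab with h' | h'
    · obtain ⟨ha, hb⟩ := hE₁ a b h'
      rw [hag1 a ha, hag1 b hb]
      exact hρ₁ a b h'
    · obtain ⟨ha, hb⟩ := hE₂ a b h'
      rw [hag2 a ha, hag2 b hb]
      have hmem := hρ₂ a b h'
      have : ρ₂ a + (ρ₁ z - ρ₂ z) - (ρ₂ b + (ρ₁ z - ρ₂ z)) = ρ₂ a - ρ₂ b := by ring
      rw [this]
      exact hmem
  constructor
  · -- UDP ⟹ decomposition of pathsInf
    intro hUDP u hu w hw
    refine le_antisymm ?_ ?_
    · -- hard direction, uses UDP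
      intro x hx
      have hreach : (G₁ ⊔ G₂).Reachable u w :=
        ((hc₁ u hu z hz1).mono le_sup_left).trans ((hc₂ z hz2 w hw).mono le_sup_right)
      obtain ⟨ρ, hρ, hρx⟩ := hUDP u w hreach x hx
      have m1 : ρ u - ρ z ∈ pathsInf (G₁ ⊔ G₂) α u z :=
        mem_pathsInf_iff.2 fun p _ => spline_sub_mem hρ p
      have m2 : ρ z - ρ w ∈ pathsInf (G₁ ⊔ G₂) α z w :=
        mem_pathsInf_iff.2 fun p _ => spline_sub_mem hρ p
      rw [Submodule.add_eq_sup]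
      have := Submodule.add_mem_sup m1 m2
      rwa [sub_add_sub_cancel, hρx] at this
    · -- easy direction: each path decomposes through z
      refine le_iInf₂ fun p hp => ?_
      have hzp : z ∈ p.support := hsupp p hu hw
      rw [← p.take_spec hzp, walkIdealSum_append]
      have t1 : pathsInf (G₁ ⊔ G₂) α u z ≤ walkIdealSum (G₁ ⊔ G₂) α (p.takeUntil z hzp) :=
        iInf₂_le _ (hp.takeUntil hzp)
      have t2 : pathsInf (G₁ ⊔ G₂) α z w ≤ walkIdealSum (G₁ ⊔ G₂) α (p.dropUntil z hzp) :=
        iInf₂_le _ (hp.dropUntil hzp)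
      simp only [Submodule.add_eq_sup]
      exact sup_le_sup t1 t2
  · -- decomposition ⟹ UDP
    intro hsum u w hr x hx
    by_cases huw : u = w
    · subst huw
      have hx0 : x ∈ (⊥ : Ideal R) := pathsInf_self_le_bot _ α u hx
      rw [Ideal.mem_bot] at hx0
      exact ⟨fun _ => 0, fun a b _ => by simp, by simp [hx0]⟩
    · have hends : ∀ {a b : V} (q : (G₁ ⊔ G₂).Walk a b), a ≠ b → a ∈ S₁ ∪ S₂ := by
        intro a b q hne
        cases q with
        | nil => exact absurd rfl hne
        | cons h q =>
          rw [sup_adj] at h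
          rcases h with h' | h'
          · exact Or.inl (hE₁ _ _ h').1
          · exact Or.inr (hE₂ _ _ h').1
      obtain ⟨p⟩ := hr
      have hu : u ∈ S₁ ∪ S₂ := hends p huw
      have hw : w ∈ S₁ ∪ S₂ := hends p.reverse (Ne.symm huw)
      rcases hu with hu | hu <;> rcases hw with hw | hw
      · -- both in S₁
        have hx1 : x ∈ pathsInf G₁ α u w := pathsInf_anti le_sup_left α u w hx
        obtain ⟨ρ₁, hρ₁, hd⟩ := h₁ u w (hc₁ u hu w hw) x hx1
        obtain ⟨ρ, hρ, hag1, -⟩ := glue ρ₁ (fun _ => 0) hρ₁ (fun a b _ => by simp)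
        exact ⟨ρ, hρ, by rw [hag1 u hu, hag1 w hw, hd]⟩
      · -- u ∈ S₁, w ∈ S₂
        have hx' := hx
        rw [hsum u hu w hw, Submodule.add_eq_sup] at hx'
        obtain ⟨x₁, hx₁, x₂, hx₂, hxx⟩ := Submodule.mem_sup.1 hx'
        have hx₁' : x₁ ∈ pathsInf G₁ α u z := pathsInf_anti le_sup_left α u z hx₁
        have hx₂' : x₂ ∈ pathsInf G₂ α z w := pathsInf_anti le_sup_right α z w hx₂
        obtain ⟨ρ₁, hρ₁, hd₁⟩ := h₁ u z (hc₁ u hu z hz1) x₁ hx₁'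
        obtain ⟨ρ₂, hρ₂, hd₂⟩ := h₂ z w (hc₂ z hz2 w hw) x₂ hx₂'
        obtain ⟨ρ, hρ, hag1, hag2⟩ := glue ρ₁ ρ₂ hρ₁ hρ₂
        refine ⟨ρ, hρ, ?_⟩
        rw [hag1 u hu, hag2 w hw]
        linear_combination hd₁ + hd₂ + hxx
      · -- u ∈ S₂, w ∈ S₁
        have hx' : x ∈ pathsInf (G₁ ⊔ G₂) α w u := by
          rw [pathsInf_symm]; exact hx
        rw [hsum w hw u hu, Submodule.add_eq_sup] at hx'
        obtain ⟨x₁, hx₁, x₂, hx₂, hxx⟩ := Submodule.mem_sup.1 hx'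
        have hx₁' : x₁ ∈ pathsInf G₁ α w z := pathsInf_anti le_sup_left α w z hx₁
        have hx₂' : x₂ ∈ pathsInf G₂ α z u := pathsInf_anti le_sup_right α z u hx₂
        obtain ⟨ρ₁, hρ₁, hd₁⟩ := h₁ w z (hc₁ w hw z hz1) (-x₁) (neg_mem hx₁')
        obtain ⟨ρ₂, hρ₂, hd₂⟩ := h₂ z u (hc₂ z hz2 u hu) (-x₂) (neg_mem hx₂')
        obtain ⟨ρ, hρ, hag1, hag2⟩ := glue ρ₁ ρ₂ hρ₁ hρ₂
        refine ⟨ρ, hρ, ?_⟩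
        rw [hag2 u hu, hag1 w hw]
        linear_combination (-1 : R) * hd₁ - hd₂ + hxx
      · -- both in S₂
        have hx2 : x ∈ pathsInf G₂ α u w := pathsInf_anti le_sup_right α u w hx
        obtain ⟨ρ₂, hρ₂, hd⟩ := h₂ u w (hc₂ u hu w hw) x hx2
        obtain ⟨ρ, hρ, -, hag2⟩ := glue (fun _ => 0) ρ₂ (fun a b _ => by simp) hρ₂
        refine ⟨ρ, hρ, ?_⟩
        rw [hag2 u hu, hag2 w hw]
        linear_combination hd
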